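/- Let T be a finite tree with at least one edge in which every vertex has degree at most 3, and let n be the number of leaves (degree-1 vertices) of T. Then there exists an edge e of T such that each of the two connected components of T with e removed contains at least n/3 leaves of T. -/

import Mathlib

open SimpleGraph Set

section Stmt1Aux
variable {V : Type*}


lemma sdel_comm (T : SimpleGraph V) (u v : V) :
    T.deleteEdges {s(u,v)} = T.deleteEdges {s(v,u)} := by rw [Sym2.eq_swap]

lemma tree_bridge {T : SimpleGraph V} (htree : T.IsTree) {u v : V} (huv : T.Adj u v) :
    ¬ (T.deleteEdges {s(u,v)}).Reachable u v := by
  have hb : T.IsBridge s(u,v) := (isAcyclic_iff_forall_adj_isBridge.mp htree.IsAcyclic) huv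
  exact SimpleGraph.isBridge_iff.mp hb

lemma reach_or_aux {T : SimpleGraph V} (u v : V) {a w : V} (p : T.Walk a w)
    (ha : (T.deleteEdges {s(u,v)}).Reachable u a ∨ (T.deleteEdges {s(u,v)}).Reachable v a) :
    (T.deleteEdges {s(u,v)}).Reachable u w ∨ (T.deleteEdges {s(u,v)}).Reachable v w := by
  induction p with
  | nil => exact ha
  | @cons a b c hab p ih =>
      apply ih
      by_cases he : s(a,b) = s(u,v)
      · rw [Sym2.eq_iff] at he
        rcases he with ⟨rfl, rfl⟩ | ⟨rfl, rfl⟩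
        · exact Or.inr (Reachable.refl _)
        · exact Or.inl (Reachable.refl _)
      · have hab' : (T.deleteEdges {s(u,v)}).Adj a b := by
          rw [SimpleGraph.deleteEdges_adj]; exact ⟨hab, by simpa using he⟩
        rcases ha with h | h
        · exact Or.inl (h.trans hab'.reachable)
        · exact Or.inr (h.trans hab'.reachable)

lemma reach_or {T : SimpleGraph V} (htree : T.IsTree) (u v : V) (w : V) :
    (T.deleteEdges {s(u,v)}).Reachable u w ∨ (T.deleteEdges {s(u,v)}).Reachable v w := by
  obtain ⟨p⟩ := htree.isConnected.preconnected u w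
  exact reach_or_aux u v p (Or.inl (Reachable.refl _))

lemma transfer_away {T : SimpleGraph V} {s : Set (Sym2 V)} {a w : V}
    (p : (T.deleteEdges s).Walk a w) (v x : V) (hv : v ∉ p.support) :
    (T.deleteEdges {s(v,x)}).Reachable a w := by
  refine ⟨p.transfer _ fun e he => ?_⟩
  rw [SimpleGraph.edgeSet_deleteEdges]
  constructor
  · exact (SimpleGraph.edgeSet_subset_edgeSet.mpr (SimpleGraph.deleteEdges_le s))
      (p.edges_subset_edgeSet he)
  · intro h
    rw [Set.mem_singleton_iff] at h
    subst h
    exact hv (p.fst_mem_support_of_mem_edges he)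

/-- vertex-set inclusion when shifting the edge along a path -/
lemma side_incl {T : SimpleGraph V} (htree : T.IsTree) {u v x : V}
    (huv : T.Adj u v) (hvx : T.Adj v x) (hxu : x ≠ u) {w : V}
    (hw : (T.deleteEdges {s(u,v)}).Reachable u w) :
    (T.deleteEdges {s(v,x)}).Reachable v w := by
  classical
  obtain ⟨p0⟩ := hw
  set p := p0.toPath with hp
  have hvs : v ∉ (p : (T.deleteEdges {s(u,v)}).Walk u w).support := by
    intro hmem
    exact tree_bridge htree huv ⟨(p : _root_.SimpleGraph.Walk _ u w).takeUntil v hmem⟩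
  have h1 : (T.deleteEdges {s(v,x)}).Reachable u w := transfer_away _ v x hvs
  have hadj : (T.deleteEdges {s(v,x)}).Adj v u := by
    rw [SimpleGraph.deleteEdges_adj]
    refine ⟨huv.symm, ?_⟩
    simp only [Set.mem_singleton_iff, Sym2.eq_iff]
    rintro (⟨-, rfl⟩ | ⟨rfl, rfl⟩)
    · exact hxu rfl
    · exact hxu rfl
  exact hadj.reachable.trans h1

/-- a leaf on the `v` side, other than `v`, lies behind one of the other neighbours of `v` -/
lemma branch_split {T : SimpleGraph V} {u v w : V}
    (huv : T.Adj u v) (hwv : w ≠ v)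
    (hw : (T.deleteEdges {s(u,v)}).Reachable v w) :
    ∃ x : V, T.Adj v x ∧ x ≠ u ∧ (T.deleteEdges {s(x,v)}).Reachable x w := by
  classical
  obtain ⟨p0⟩ := hw
  obtain ⟨p, hpath⟩ := p0.toPath
  cases p with
  | nil => exact absurd rfl hwv
  | @cons _ x _ hvx q =>
      have hxadj : T.Adj v x := (SimpleGraph.deleteEdges_adj.mp hvx).1
      have hxe : s(v,x) ∉ ({s(u,v)} : Set (Sym2 V)) := (SimpleGraph.deleteEdges_adj.mp hvx).2
      have hxu : x ≠ u := by
        rintro rfl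
        exact hxe (by rw [Set.mem_singleton_iff, Sym2.eq_swap])
      have hvq : v ∉ q.support := by
        rw [SimpleGraph.Walk.cons_isPath_iff] at hpath
        exact hpath.2
      refine ⟨x, hxadj, hxu, ?_⟩
      have h2 := transfer_away q v x hvq
      rwa [Sym2.eq_swap] at h2

lemma exists_leaf {V : Type*} [Fintype V] {T : SimpleGraph V} (htree : T.IsTree) :
    ∀ (k : ℕ) (u v : V), T.Adj u v →
      {w | (T.deleteEdges {s(u,v)}).Reachable u w}.ncard ≤ k →
      ∃ w, (T.neighborSet w).ncard = 1 ∧ (T.deleteEdges {s(u,v)}).Reachable u w := by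
  intro k
  induction k with
  | zero =>
      intro u v huv hcard
      exfalso
      have : 0 < {w | (T.deleteEdges {s(u,v)}).Reachable u w}.ncard := by
        rw [Set.ncard_pos (Set.toFinite _)]
        exact ⟨u, Reachable.refl _⟩
      omega
  | succ k ih =>
      intro u v huv hcard
      by_cases hu : (T.neighborSet u).ncard = 1
      · exact ⟨u, hu, Reachable.refl _⟩
      · -- u has a neighbour c ≠ v
        have hv : v ∈ T.neighborSet u := huv
        have h2 : 1 < (T.neighborSet u).ncard := by
          have h1 : 0 < (T.neighborSet u).ncard := by
            rw [Set.ncard_pos (Set.toFinite _)]; exact ⟨v, hv⟩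
          omega
        obtain ⟨a, b, ha, hb, hab⟩ := (Set.one_lt_ncard_iff (Set.toFinite _)).mp h2
        obtain ⟨c, hc, hcv⟩ : ∃ c ∈ T.neighborSet u, c ≠ v := by
          by_cases hav : a = v
          · exact ⟨b, hb, fun h => hab (hav ▸ h ▸ rfl)⟩
          · exact ⟨a, ha, hav⟩
        have hcu : T.Adj c u := T.adj_symm hc
        have hincl : ∀ w, (T.deleteEdges {s(c,u)}).Reachable c w →
            (T.deleteEdges {s(u,v)}).Reachable u w :=
          fun w hw => side_incl htree hcu huv hcv.symm hw
        have hss : {w | (T.deleteEdges {s(c,u)}).Reachable c w} ⊂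
            {w | (T.deleteEdges {s(u,v)}).Reachable u w} := by
          constructor
          · intro w hw; exact hincl w hw
          · intro hsub
            exact tree_bridge htree hcu (hsub (Reachable.refl u))
        have hlt := Set.ncard_lt_ncard hss (Set.toFinite _)
        obtain ⟨w, hwleaf, hwreach⟩ := ih c u hcu (by omega)
        exact ⟨w, hwleaf, hincl w hwreach⟩

lemma leaf_count {V : Type*} [Fintype V] {T : SimpleGraph V} (htree : T.IsTree)
    {u v : V} (huv : T.Adj u v) :
    {w : V | (T.neighborSet w).ncard = 1 ∧ (T.deleteEdges {s(u,v)}).Reachable u w}.ncard +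
      {w : V | (T.neighborSet w).ncard = 1 ∧ (T.deleteEdges {s(u,v)}).Reachable v w}.ncard =
      {w : V | (T.neighborSet w).ncard = 1}.ncard := by
  rw [← Set.ncard_union_eq ?_ (Set.toFinite _) (Set.toFinite _)]
  · congr 1
    ext w
    simp only [Set.mem_union, Set.mem_setOf_eq]
    constructor
    · rintro (⟨h, -⟩ | ⟨h, -⟩) <;> exact h
    · intro h
      rcases reach_or htree u v w with hr | hr
      · exact Or.inl ⟨h, hr⟩
      · exact Or.inr ⟨h, hr⟩
  · rw [Set.disjoint_left]
    rintro w ⟨-, hru⟩ ⟨-, hrv⟩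
    exact tree_bridge htree huv (hru.trans hrv.symm)

/-- number of leaves of `T` on the `a`-side after deleting edge `ab` -/
noncomputable def lcount (T : SimpleGraph V) (a b : V) : ℕ :=
  {w : V | (T.neighborSet w).ncard = 1 ∧ (T.deleteEdges {s(a,b)}).Reachable a w}.ncard

/-- number of vertices of `T` on the `a`-side after deleting edge `ab` -/
noncomputable def scount (T : SimpleGraph V) (a b : V) : ℕ :=
  {w : V | (T.deleteEdges {s(a,b)}).Reachable a w}.ncard

lemma lcount_sum {V : Type*} [Fintype V] {T : SimpleGraph V} (htree : T.IsTree)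
    {a b : V} (hab : T.Adj a b) :
    lcount T a b + lcount T b a = {w : V | (T.neighborSet w).ncard = 1}.ncard := by
  have h := leaf_count htree hab
  rw [lcount, lcount, sdel_comm T b a]
  exact h

lemma lcount_pos {V : Type*} [Fintype V] {T : SimpleGraph V} (htree : T.IsTree)
    {a b : V} (hab : T.Adj a b) : 1 ≤ lcount T a b := by
  obtain ⟨w, hw1, hw2⟩ := exists_leaf htree
    ({w : V | (T.deleteEdges {s(a,b)}).Reachable a w}.ncard) a b hab le_rfl
  rw [lcount]
  have := (Set.ncard_pos (s := {w : V | (T.neighborSet w).ncard = 1 ∧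
    (T.deleteEdges {s(a,b)}).Reachable a w}) (Set.toFinite _)).mpr ⟨w, hw1, hw2⟩
  omega

end Stmt1Aux

/-- Let `T` be a finite tree with at least one edge in which every
vertex has degree at most 3, and let `n` be its number of leaves (degree-1 vertices).
Then there exists an edge `e = {u, v}` of `T` such that each of the two connected
components of `T` with `e` removed (the component of `u` and the component of `v`)
contains at least `n / 3` leaves of `T`. -/
theorem stmt_1 {V : Type*} [Fintype V] (T : SimpleGraph V)
    (htree : T.IsTree)
    (hdeg : ∀ v : V, (T.neighborSet v).ncard ≤ 3)
    (hedge : T.edgeSet.Nonempty)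
    (n : ℕ) (hn : n = {v : V | (T.neighborSet v).ncard = 1}.ncard) :
    ∃ u v : V, T.Adj u v ∧
      (n : ℝ) / 3 ≤
        ({w : V | (T.neighborSet w).ncard = 1 ∧
          (T.deleteEdges {s(u, v)}).Reachable u w}.ncard : ℝ) ∧
      (n : ℝ) / 3 ≤
        ({w : V | (T.neighborSet w).ncard = 1 ∧
          (T.deleteEdges {s(u, v)}).Reachable v w}.ncard : ℝ) := by
  classical
  set c : ℕ := Nat.card V with hc
  have hsc : ∀ a b : V, scount T a b ≤ c := by
    intro a b
    rw [scount, hc, ← Set.ncard_univ]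
    exact Set.ncard_le_ncard (Set.subset_univ _) Set.finite_univ
  set score : V × V → ℕ := fun p => lcount T p.1 p.2 * (c + 1) + scount T p.1 p.2 with hscore
  set P : Set (V × V) := {p | T.Adj p.1 p.2 ∧ lcount T p.1 p.2 ≤ lcount T p.2 p.1} with hP
  -- P is nonempty
  have hPne : P.Nonempty := by
    obtain ⟨e, he⟩ := hedge
    induction e using Sym2.ind with
    | _ a b =>
      rw [SimpleGraph.mem_edgeSet] at he
      rcases le_total (lcount T a b) (lcount T b a) with h | h
      · exact ⟨(a, b), he, h⟩
      · exact ⟨(b, a), he.symm, h⟩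
  -- pick a maximal element
  obtain ⟨⟨u, v⟩, hPuv, hmax⟩ := Set.exists_max_image P score P.toFinite hPne
  obtain ⟨huv, hle⟩ := hPuv
  simp only at huv hle
  refine ⟨u, v, huv, ?_⟩
  -- reduce to a natural-number inequality
  suffices h3 : n ≤ 3 * lcount T u v by
    have h4 : n ≤ 3 * lcount T v u := le_trans h3 (by omega)
    have e2 : {w : V | (T.neighborSet w).ncard = 1 ∧
        (T.deleteEdges {s(u, v)}).Reachable v w}.ncard = lcount T v u := by
      rw [lcount, sdel_comm T v u]
    constructor
    · rw [div_le_iff₀ (by norm_num : (0:ℝ) < 3)]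
      have h5 : n ≤ (lcount T u v) * 3 := by omega
      rw [lcount] at h5
      exact_mod_cast h5
    · rw [div_le_iff₀ (by norm_num : (0:ℝ) < 3)]
      have h5 : n ≤ (lcount T v u) * 3 := by omega
      rw [← e2] at h5
      exact_mod_cast h5
  by_contra hcon
  have h3' : 3 * lcount T u v < n := by omega
  have hL1 : 1 ≤ lcount T u v := lcount_pos htree huv
  have hsum : lcount T u v + lcount T v u = n := by rw [hn]; exact lcount_sum htree huv
  -- `v` is not a leaf
  have hvnl : (T.neighborSet v).ncard ≠ 1 := by
    intro hdv
    obtain ⟨a, ha⟩ := Set.ncard_eq_one.mp hdv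
    have hua : u = a := by
      have h := huv.symm
      rw [← SimpleGraph.mem_neighborSet, ha, Set.mem_singleton_iff] at h
      exact h
    subst hua
    have honly : ∀ w, (T.deleteEdges {s(u,v)}).Reachable v w → w = v := by
      rintro w ⟨p⟩
      cases p with
      | nil => rfl
      | @cons _ y _ h q =>
          exfalso
          have h' := SimpleGraph.deleteEdges_adj.mp h
          have hy : y ∈ T.neighborSet v := h'.1
          rw [ha, Set.mem_singleton_iff] at hy
          subst hy
          exact h'.2 (by rw [Set.mem_singleton_iff, Sym2.eq_swap])
    have hsub : {w : V | (T.neighborSet w).ncard = 1 ∧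
        (T.deleteEdges {s(v,u)}).Reachable v w} ⊆ {v} := by
      intro w hw
      rw [Set.mem_singleton_iff]
      refine honly w ?_
      rw [sdel_comm T u v]
      exact hw.2
    have hlv : lcount T v u ≤ 1 := by
      rw [lcount]
      calc _ ≤ ({v} : Set V).ncard := Set.ncard_le_ncard hsub (Set.toFinite _)
        _ = 1 := Set.ncard_singleton v
    omega
  -- the other neighbours of `v`
  set A : Set V := T.neighborSet v \ {u} with hA
  have huA : u ∈ T.neighborSet v := huv.symm
  have hA2 : A.ncard ≤ 2 := by
    rw [hA, Set.ncard_diff_singleton_of_mem huA]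
    have := hdeg v
    omega
  have hAne : A.Nonempty := by
    have h1 : 0 < (T.neighborSet v).ncard :=
      (Set.ncard_pos (Set.toFinite _)).mpr ⟨u, huA⟩
    have h2 : 1 < (T.neighborSet v).ncard := by omega
    obtain ⟨a, b, hma, hmb, hab⟩ := (Set.one_lt_ncard_iff (Set.toFinite _)).mp h2
    by_cases hau : a = u
    · exact ⟨b, hmb, by intro h; rw [Set.mem_singleton_iff] at h; subst h; exact hab hau⟩
    · exact ⟨a, hma, by simpa using hau⟩
  -- every leaf on the `v` side lies behind a neighbour in `A`
  have hcov : ∀ w, w ∈ {w : V | (T.neighborSet w).ncard = 1 ∧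
      (T.deleteEdges {s(v,u)}).Reachable v w} →
      ∃ x ∈ A, w ∈ {w : V | (T.neighborSet w).ncard = 1 ∧
        (T.deleteEdges {s(x,v)}).Reachable x w} := by
    rintro w ⟨hwleaf, hwreach⟩
    have hwv : w ≠ v := fun h => hvnl (h ▸ hwleaf)
    rw [← sdel_comm T u v] at hwreach
    obtain ⟨x, hvx, hxu, hxw⟩ := branch_split huv hwv hwreach
    exact ⟨x, ⟨hvx, by simpa using hxu⟩, hwleaf, hxw⟩
  -- one branch carries at least half of the `v`-side leaves
  obtain ⟨x, hxA, hx2⟩ : ∃ x ∈ A, lcount T v u ≤ 2 * lcount T x v := by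
    have h0 : 0 < A.ncard := (Set.ncard_pos (Set.toFinite _)).mpr hAne
    have h12 : A.ncard = 1 ∨ A.ncard = 2 := by omega
    rcases h12 with h1 | h2
    · obtain ⟨a, ha⟩ := Set.ncard_eq_one.mp h1
      refine ⟨a, by rw [ha]; exact rfl, ?_⟩
      have hsub : {w : V | (T.neighborSet w).ncard = 1 ∧
          (T.deleteEdges {s(v,u)}).Reachable v w} ⊆
          {w : V | (T.neighborSet w).ncard = 1 ∧
          (T.deleteEdges {s(a,v)}).Reachable a w} := by
        intro w hw
        obtain ⟨y, hyA, hy⟩ := hcov w hw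
        rw [ha, Set.mem_singleton_iff] at hyA
        subst hyA
        exact hy
      have h5 := Set.ncard_le_ncard hsub (Set.toFinite _)
      simp only [lcount]
      omega
    · obtain ⟨a, b, hab, hA'⟩ := Set.ncard_eq_two.mp h2
      have hsub : {w : V | (T.neighborSet w).ncard = 1 ∧
          (T.deleteEdges {s(v,u)}).Reachable v w} ⊆
          {w : V | (T.neighborSet w).ncard = 1 ∧
          (T.deleteEdges {s(a,v)}).Reachable a w} ∪
          {w : V | (T.neighborSet w).ncard = 1 ∧
          (T.deleteEdges {s(b,v)}).Reachable b w} := by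
        intro w hw
        obtain ⟨y, hyA, hy⟩ := hcov w hw
        rw [hA'] at hyA
        rcases hyA with rfl | hyb
        · exact Or.inl hy
        · rw [Set.mem_singleton_iff] at hyb
          subst hyb
          exact Or.inr hy
      have hun := le_trans (Set.ncard_le_ncard hsub (Set.toFinite _))
        (Set.ncard_union_le _ _)
      have hma : a ∈ A := by rw [hA']; exact Set.mem_insert _ _
      have hmb : b ∈ A := by rw [hA']; exact Set.mem_insert_of_mem _ rfl
      rcases le_total (lcount T a v) (lcount T b v) with h | h
      · refine ⟨b, hmb, ?_⟩
        simp only [lcount] at h ⊢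
        omega
      · refine ⟨a, hma, ?_⟩
        simp only [lcount] at h ⊢
        omega
  obtain ⟨hxNv, hxu'⟩ := hxA
  have hvx : T.Adj v x := hxNv
  have hxu : x ≠ u := by simpa using hxu'
  have hFL : lcount T u v < lcount T x v := by omega
  have hvxge : lcount T u v ≤ lcount T v x := by
    apply Set.ncard_le_ncard _ (Set.toFinite _)
    rintro w ⟨hwl, hwr⟩
    exact ⟨hwl, side_incl htree huv hvx hxu hwr⟩
  have hsum2 : lcount T v x + lcount T x v = n := by rw [hn]; exact lcount_sum htree hvx
  have hsuv : scount T u v < scount T v x := by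
    apply Set.ncard_lt_ncard _ (Set.toFinite _)
    constructor
    · intro w hw
      exact side_incl htree huv hvx hxu hw
    · intro hss
      exact tree_bridge htree huv (hss (Reachable.refl v))
  have hcu : scount T u v ≤ c := hsc u v
  have hcx : scount T v x ≤ c := hsc v x
  rcases le_or_gt (lcount T v x) (lcount T x v) with hcase | hcase
  · have hPm : ((v, x) : V × V) ∈ P := ⟨hvx, hcase⟩
    have hs := hmax _ hPm
    simp only [hscore] at hs
    rcases lt_or_eq_of_le hvxge with hlt | heq
    · nlinarith [hs, hlt, hcu, hcx]
    · rw [← heq] at hs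
      omega
  · have hPm : ((x, v) : V × V) ∈ P := ⟨hvx.symm, le_of_lt hcase⟩
    have hs := hmax _ hPm
    simp only [hscore] at hs
    nlinarith [hs, hFL, hcu]
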